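/- Let h > 0, M ≥ 0, a ∈ ℝ, and let f₁, f₂ : ℝ → ℝ be twice continuously differentiable on [a, a + 2h] with |f₁″(s)| ≤ M and |f₂″(s)| ≤ M for all s ∈ [a, a + 2h]. Set f = f₁ + f₂. Then |∫ₐ^{a+h} (f(s) − f₁(a) − f₂(a+h)) ds + ∫_{a+h}^{a+2h} (f(s) − f₂(a+h) − f₁(a+2h)) ds| ≤ 2·M·h³. -/

import Mathlib

set_option maxHeartbeats 1000000
open Set intervalIntegral

lemma int_sub_c (p q c : ℝ) : ∫ s in p..q, (s - c) = ((q - c) ^ 2 - (p - c) ^ 2) / 2 := by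
  have := intervalIntegral.integral_comp_sub_right (a := p) (b := q) (fun x => x) c
  rw [this, integral_id]

lemma int_sq_c (p q c : ℝ) : ∫ s in p..q, (s - c) ^ 2 = ((q - c) ^ 3 - (p - c) ^ 3) / 3 := by
  have := intervalIntegral.integral_comp_sub_right (a := p) (b := q) (fun x => x ^ 2) c
  rw [this, integral_pow]
  norm_num

lemma abs_add5 (x1 x2 x3 x4 x5 : ℝ) :
    |x1 + x2 + x3 + x4 + x5| ≤ |x1| + |x2| + |x3| + |x4| + |x5| := by
  calc |x1 + x2 + x3 + x4 + x5| ≤ |x1 + x2 + x3 + x4| + |x5| := abs_add_le _ _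
    _ ≤ |x1 + x2 + x3| + |x4| + |x5| := by have := abs_add_le (x1 + x2 + x3) x4; linarith
    _ ≤ |x1 + x2| + |x3| + |x4| + |x5| := by have := abs_add_le (x1 + x2) x3; linarith
    _ ≤ _ := by have := abs_add_le x1 x2; linarith

lemma taylor_aux {a b M : ℝ} {g g' : ℝ → ℝ}
    (hg : ∀ t ∈ Icc a b, HasDerivWithinAt g (g' t) (Icc a b) t)
    (hgc : ContinuousOn g' (Icc a b))
    {c x : ℝ} (hc : c ∈ Icc a b) (hx : x ∈ Icc a b)
    (hLip : ∀ t ∈ Icc a b, |g' t - g' c| ≤ M * |t - c|) :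
    |g x - g c - g' c * (x - c)| ≤ M / 2 * (x - c) ^ 2 := by
  have hsub : uIcc c x ⊆ Icc a b := uIcc_subset_Icc hc hx
  have hint : IntervalIntegrable g' MeasureTheory.volume c x :=
    (hgc.mono hsub).intervalIntegrable
  have hftc : ∫ t in c..x, g' t = g x - g c := by
    apply intervalIntegral.integral_eq_sub_of_hasDeriv_right
    · exact fun t ht => ((hg t (hsub ht)).continuousWithinAt).mono hsub
    · intro t ht
      have h1 : a < t := lt_of_le_of_lt (le_min hc.1 hx.1) ht.1
      have h2 : t < b := lt_of_lt_of_le ht.2 (max_le hc.2 hx.2)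
      exact ((hg t ⟨h1.le, h2.le⟩).hasDerivAt (Icc_mem_nhds h1 h2)).hasDerivWithinAt
    · exact hint
  have key : g x - g c - g' c * (x - c) = ∫ t in c..x, (g' t - g' c) := by
    rw [intervalIntegral.integral_sub hint intervalIntegrable_const, hftc,
      intervalIntegral.integral_const, smul_eq_mul]
    ring
  rw [key]
  rcases le_total c x with hcx | hxc
  · have huicc : uIcc c x = Icc c x := uIcc_of_le hcx
    have hint1 : IntervalIntegrable (fun t => |g' t - g' c|) MeasureTheory.volume c x :=
      (((hgc.mono hsub).sub continuousOn_const).abs).intervalIntegrable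
    have hint2 : IntervalIntegrable (fun t => M * (t - c)) MeasureTheory.volume c x :=
      (Continuous.intervalIntegrable (continuous_const.mul (continuous_id.sub continuous_const)) c x)
    calc |∫ t in c..x, (g' t - g' c)| ≤ ∫ t in c..x, |g' t - g' c| :=
          intervalIntegral.abs_integral_le_integral_abs hcx
      _ ≤ ∫ t in c..x, M * (t - c) := by
          apply intervalIntegral.integral_mono_on hcx hint1 hint2
          intro t ht
          have := hLip t (hsub (huicc ▸ ht))
          rwa [abs_of_nonneg (by linarith [ht.1] : (0:ℝ) ≤ t - c)] at this
      _ = M / 2 * (x - c) ^ 2 := by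
          rw [intervalIntegral.integral_const_mul, int_sub_c]; ring
  · have huicc : uIcc c x = Icc x c := uIcc_of_ge hxc
    have hint1 : IntervalIntegrable (fun t => |g' t - g' c|) MeasureTheory.volume x c :=
      (((hgc.mono hsub).sub continuousOn_const).abs).intervalIntegrable.symm
    have hint2 : IntervalIntegrable (fun t => M * (c - t)) MeasureTheory.volume x c :=
      (Continuous.intervalIntegrable (continuous_const.mul (continuous_sub_left c)) x c)
    have hswap : |∫ t in c..x, (g' t - g' c)| = |∫ t in x..c, (g' t - g' c)| := by
      rw [intervalIntegral.integral_symm, abs_neg]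
    rw [hswap]
    calc |∫ t in x..c, (g' t - g' c)| ≤ ∫ t in x..c, |g' t - g' c| :=
          intervalIntegral.abs_integral_le_integral_abs hxc
      _ ≤ ∫ t in x..c, M * (c - t) := by
          apply intervalIntegral.integral_mono_on hxc hint1 hint2
          intro t ht
          have := hLip t (hsub (huicc ▸ ht))
          rwa [abs_of_nonpos (by linarith [ht.2] : t - c ≤ 0), neg_sub] at this
      _ = M / 2 * (x - c) ^ 2 := by
          have : (fun t => M * (c - t)) = fun t => -(M * (t - c)) := by funext t; ring
          rw [this, intervalIntegral.integral_neg, intervalIntegral.integral_const_mul, int_sub_c]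
          ring

theorem alternating_splitting_two_step_error
    (h M a : ℝ) (hh : 0 < h) (hM : 0 ≤ M)
    (f₁ f₂ : ℝ → ℝ)
    (hf₁ : ContDiffOn ℝ 2 f₁ (Icc a (a + 2 * h)))
    (hf₂ : ContDiffOn ℝ 2 f₂ (Icc a (a + 2 * h)))
    (hf₁'' : ∀ s ∈ Icc a (a + 2 * h),
      |iteratedDerivWithin 2 f₁ (Icc a (a + 2 * h)) s| ≤ M)
    (hf₂'' : ∀ s ∈ Icc a (a + 2 * h),
      |iteratedDerivWithin 2 f₂ (Icc a (a + 2 * h)) s| ≤ M) :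
    |(∫ s in a..(a + h), (f₁ s + f₂ s) - f₁ a - f₂ (a + h))
        + ∫ s in (a + h)..(a + 2 * h), (f₁ s + f₂ s) - f₂ (a + h) - f₁ (a + 2 * h)|
      ≤ 2 * M * h ^ 3 := by
  have hab : a < a + 2 * h := by linarith
  set I := Icc a (a + 2 * h) with hIdef
  have hu : UniqueDiffOn ℝ I := uniqueDiffOn_Icc hab
  have haI : a ∈ I := ⟨le_refl a, hab.le⟩
  have hmI : a + h ∈ I := ⟨by linarith, by linarith⟩
  have hbI : a + 2 * h ∈ I := ⟨hab.le, le_refl _⟩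
  set F₁ := derivWithin f₁ I with hF₁def
  set F₂ := derivWithin f₂ I with hF₂def
  have hd₁ : ∀ t ∈ I, HasDerivWithinAt f₁ (F₁ t) I t :=
    fun t ht => ((hf₁.differentiableOn (by norm_num)) t ht).hasDerivWithinAt
  have hd₂ : ∀ t ∈ I, HasDerivWithinAt f₂ (F₂ t) I t :=
    fun t ht => ((hf₂.differentiableOn (by norm_num)) t ht).hasDerivWithinAt
  have hF₁cd : ContDiffOn ℝ 1 F₁ I := hf₁.derivWithin hu (by norm_num)
  have hF₂cd : ContDiffOn ℝ 1 F₂ I := hf₂.derivWithin hu (by norm_num)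
  have hiter : ∀ (f : ℝ → ℝ), ∀ t ∈ I,
      iteratedDerivWithin 2 f I t = derivWithin (derivWithin f I) I t := by
    intro f t ht
    rw [show (2 : ℕ) = 1 + 1 from rfl, iteratedDerivWithin_succ',
      iteratedDerivWithin_one]
  have hDF₁ : ∀ t ∈ I, HasDerivWithinAt F₁ (iteratedDerivWithin 2 f₁ I t) I t := by
    intro t ht
    rw [hiter f₁ t ht]
    exact ((hF₁cd.differentiableOn (by norm_num)) t ht).hasDerivWithinAt
  have hDF₂ : ∀ t ∈ I, HasDerivWithinAt F₂ (iteratedDerivWithin 2 f₂ I t) I t := by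
    intro t ht
    rw [hiter f₂ t ht]
    exact ((hF₂cd.differentiableOn (by norm_num)) t ht).hasDerivWithinAt
  have hLip₁ : ∀ u ∈ I, ∀ v ∈ I, |F₁ u - F₁ v| ≤ M * |u - v| := by
    intro u hu' v hv
    have := (convex_Icc a (a + 2 * h)).norm_image_sub_le_of_norm_hasDerivWithin_le hDF₁
      (fun s hs => by rw [Real.norm_eq_abs]; exact hf₁'' s hs) hv hu'
    simpa [Real.norm_eq_abs] using this
  have hLip₂ : ∀ u ∈ I, ∀ v ∈ I, |F₂ u - F₂ v| ≤ M * |u - v| := by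
    intro u hu' v hv
    have := (convex_Icc a (a + 2 * h)).norm_image_sub_le_of_norm_hasDerivWithin_le hDF₂
      (fun s hs => by rw [Real.norm_eq_abs]; exact hf₂'' s hs) hv hu'
    simpa [Real.norm_eq_abs] using this
  -- Taylor bounds
  have T₁ : ∀ s ∈ I, |f₁ s - f₁ a - F₁ a * (s - a)| ≤ M / 2 * (s - a) ^ 2 :=
    fun s hs => taylor_aux hd₁ hF₁cd.continuousOn haI hs (fun t ht => hLip₁ t ht a haI)
  have T₂ : ∀ s ∈ I, |f₁ s - f₁ (a + 2 * h) - F₁ (a + 2 * h) * (s - (a + 2 * h))|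
      ≤ M / 2 * (s - (a + 2 * h)) ^ 2 :=
    fun s hs => taylor_aux hd₁ hF₁cd.continuousOn hbI hs
      (fun t ht => hLip₁ t ht (a + 2 * h) hbI)
  have T₃ : ∀ s ∈ I, |f₂ s - f₂ (a + h) - F₂ (a + h) * (s - (a + h))|
      ≤ M / 2 * (s - (a + h)) ^ 2 :=
    fun s hs => taylor_aux hd₂ hF₂cd.continuousOn hmI hs
      (fun t ht => hLip₂ t ht (a + h) hmI)
  -- integrands
  set A₁ : ℝ → ℝ := fun s => f₁ s - f₁ a - F₁ a * (s - a) with hA₁def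
  set A₂ : ℝ → ℝ := fun s => f₁ s - f₁ (a + 2 * h) - F₁ (a + 2 * h) * (s - (a + 2 * h))
    with hA₂def
  set B : ℝ → ℝ := fun s => f₂ s - f₂ (a + h) - F₂ (a + h) * (s - (a + h)) with hBdef
  have hc₁ : ContinuousOn f₁ I := hf₁.continuousOn
  have hc₂ : ContinuousOn f₂ I := hf₂.continuousOn
  have hA₁cont : ContinuousOn A₁ I :=
    (hc₁.sub continuousOn_const).sub
      (continuousOn_const.mul ((continuous_id.sub continuous_const).continuousOn))
  have hA₂cont : ContinuousOn A₂ I :=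
    (hc₁.sub continuousOn_const).sub
      (continuousOn_const.mul ((continuous_id.sub continuous_const).continuousOn))
  have hBcont : ContinuousOn B I :=
    (hc₂.sub continuousOn_const).sub
      (continuousOn_const.mul ((continuous_id.sub continuous_const).continuousOn))
  have hsub1 : Icc a (a + h) ⊆ I := Icc_subset_Icc le_rfl (by linarith)
  have hsub2 : Icc (a + h) (a + 2 * h) ⊆ I := Icc_subset_Icc (by linarith) le_rfl
  have hii1 : ∀ {g : ℝ → ℝ}, ContinuousOn g I →
      IntervalIntegrable g MeasureTheory.volume a (a + h) := by
    intro g hg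
    apply ContinuousOn.intervalIntegrable
    rw [uIcc_of_le (by linarith : a ≤ a + h)]
    exact hg.mono hsub1
  have hii2 : ∀ {g : ℝ → ℝ}, ContinuousOn g I →
      IntervalIntegrable g MeasureTheory.volume (a + h) (a + 2 * h) := by
    intro g hg
    apply ContinuousOn.intervalIntegrable
    rw [uIcc_of_le (by linarith : a + h ≤ a + 2 * h)]
    exact hg.mono hsub2
  -- decomposition of the first integral
  have hE1 : (∫ s in a..(a + h), (f₁ s + f₂ s) - f₁ a - f₂ (a + h))
      = (∫ s in a..(a + h), A₁ s) + (∫ s in a..(a + h), B s)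
        + (F₁ a * (h ^ 2 / 2) - F₂ (a + h) * (h ^ 2 / 2)) := by
    have congr1 : (∫ s in a..(a + h), (f₁ s + f₂ s) - f₁ a - f₂ (a + h))
        = ∫ s in a..(a + h),
            (A₁ s + B s + (F₁ a * (s - a) + F₂ (a + h) * (s - (a + h)))) := by
      apply intervalIntegral.integral_congr
      intro s _
      simp only [hA₁def, hBdef]
      ring
    have hip : IntervalIntegrable (fun s => F₁ a * (s - a) + F₂ (a + h) * (s - (a + h)))
        MeasureTheory.volume a (a + h) :=
      Continuous.intervalIntegrable ((continuous_const.mul (continuous_id.sub continuous_const)).add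
        (continuous_const.mul (continuous_id.sub continuous_const))) _ _
    have hip1 : IntervalIntegrable (fun s => F₁ a * (s - a)) MeasureTheory.volume a (a + h) :=
      Continuous.intervalIntegrable (continuous_const.mul (continuous_id.sub continuous_const)) _ _
    have hip2 : IntervalIntegrable (fun s => F₂ (a + h) * (s - (a + h)))
        MeasureTheory.volume a (a + h) :=
      Continuous.intervalIntegrable (continuous_const.mul (continuous_id.sub continuous_const)) _ _
    rw [congr1, intervalIntegral.integral_add ((hii1 hA₁cont).add (hii1 hBcont)) hip,
      intervalIntegral.integral_add (hii1 hA₁cont) (hii1 hBcont),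
      intervalIntegral.integral_add hip1 hip2,
      intervalIntegral.integral_const_mul, intervalIntegral.integral_const_mul,
      int_sub_c, int_sub_c]
    ring
  have hE2 : (∫ s in (a + h)..(a + 2 * h), (f₁ s + f₂ s) - f₂ (a + h) - f₁ (a + 2 * h))
      = (∫ s in (a + h)..(a + 2 * h), A₂ s) + (∫ s in (a + h)..(a + 2 * h), B s)
        + (F₂ (a + h) * (h ^ 2 / 2) - F₁ (a + 2 * h) * (h ^ 2 / 2)) := by
    have congr2 : (∫ s in (a + h)..(a + 2 * h), (f₁ s + f₂ s) - f₂ (a + h) - f₁ (a + 2 * h))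
        = ∫ s in (a + h)..(a + 2 * h),
            (A₂ s + B s + (F₁ (a + 2 * h) * (s - (a + 2 * h)) + F₂ (a + h) * (s - (a + h)))) := by
      apply intervalIntegral.integral_congr
      intro s _
      simp only [hA₂def, hBdef]
      ring
    have hip : IntervalIntegrable
        (fun s => F₁ (a + 2 * h) * (s - (a + 2 * h)) + F₂ (a + h) * (s - (a + h)))
        MeasureTheory.volume (a + h) (a + 2 * h) :=
      Continuous.intervalIntegrable ((continuous_const.mul (continuous_id.sub continuous_const)).add
        (continuous_const.mul (continuous_id.sub continuous_const))) _ _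
    have hip1 : IntervalIntegrable (fun s => F₁ (a + 2 * h) * (s - (a + 2 * h)))
        MeasureTheory.volume (a + h) (a + 2 * h) :=
      Continuous.intervalIntegrable (continuous_const.mul (continuous_id.sub continuous_const)) _ _
    have hip2 : IntervalIntegrable (fun s => F₂ (a + h) * (s - (a + h)))
        MeasureTheory.volume (a + h) (a + 2 * h) :=
      Continuous.intervalIntegrable (continuous_const.mul (continuous_id.sub continuous_const)) _ _
    rw [congr2, intervalIntegral.integral_add ((hii2 hA₂cont).add (hii2 hBcont)) hip,
      intervalIntegral.integral_add (hii2 hA₂cont) (hii2 hBcont),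
      intervalIntegral.integral_add hip1 hip2,
      intervalIntegral.integral_const_mul, intervalIntegral.integral_const_mul,
      int_sub_c, int_sub_c]
    ring
  -- generic remainder bound
  have hbound : ∀ (g : ℝ → ℝ) (p q c : ℝ), p ≤ q → Icc p q ⊆ I →
      ContinuousOn g I → (∀ s ∈ Icc p q, |g s| ≤ M / 2 * (s - c) ^ 2) →
      |∫ s in p..q, g s| ≤ M / 2 * (((q - c) ^ 3 - (p - c) ^ 3) / 3) := by
    intro g p q c hpq hsubI hgc hg
    have huicc : uIcc p q = Icc p q := uIcc_of_le hpq
    have hi1 : IntervalIntegrable (fun s => |g s|) MeasureTheory.volume p q := by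
      apply ContinuousOn.intervalIntegrable
      rw [huicc]
      exact (hgc.mono hsubI).abs
    have hi2 : IntervalIntegrable (fun s => M / 2 * (s - c) ^ 2) MeasureTheory.volume p q :=
      Continuous.intervalIntegrable (continuous_const.mul ((continuous_id.sub continuous_const).pow 2)) _ _
    calc |∫ s in p..q, g s| ≤ ∫ s in p..q, |g s| :=
          intervalIntegral.abs_integral_le_integral_abs hpq
      _ ≤ ∫ s in p..q, M / 2 * (s - c) ^ 2 :=
          intervalIntegral.integral_mono_on hpq hi1 hi2 hg
      _ = M / 2 * (((q - c) ^ 3 - (p - c) ^ 3) / 3) := by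
          rw [intervalIntegral.integral_const_mul, int_sq_c]
  have bA₁ : |∫ s in a..(a + h), A₁ s| ≤ M * h ^ 3 / 6 := by
    have := hbound A₁ a (a + h) a (by linarith) hsub1 hA₁cont
      (fun s hs => T₁ s (hsub1 hs))
    calc |∫ s in a..(a + h), A₁ s|
        ≤ M / 2 * (((a + h - a) ^ 3 - (a - a) ^ 3) / 3) := this
      _ = M * h ^ 3 / 6 := by ring
  have bB₁ : |∫ s in a..(a + h), B s| ≤ M * h ^ 3 / 6 := by
    have := hbound B a (a + h) (a + h) (by linarith) hsub1 hBcont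
      (fun s hs => T₃ s (hsub1 hs))
    calc |∫ s in a..(a + h), B s|
        ≤ M / 2 * (((a + h - (a + h)) ^ 3 - (a - (a + h)) ^ 3) / 3) := this
      _ = M * h ^ 3 / 6 := by ring
  have bA₂ : |∫ s in (a + h)..(a + 2 * h), A₂ s| ≤ M * h ^ 3 / 6 := by
    have := hbound A₂ (a + h) (a + 2 * h) (a + 2 * h) (by linarith) hsub2 hA₂cont
      (fun s hs => T₂ s (hsub2 hs))
    calc |∫ s in (a + h)..(a + 2 * h), A₂ s|
        ≤ M / 2 * (((a + 2 * h - (a + 2 * h)) ^ 3 - (a + h - (a + 2 * h)) ^ 3) / 3) := this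
      _ = M * h ^ 3 / 6 := by ring
  have bB₂ : |∫ s in (a + h)..(a + 2 * h), B s| ≤ M * h ^ 3 / 6 := by
    have := hbound B (a + h) (a + 2 * h) (a + h) (by linarith) hsub2 hBcont
      (fun s hs => T₃ s (hsub2 hs))
    calc |∫ s in (a + h)..(a + 2 * h), B s|
        ≤ M / 2 * (((a + 2 * h - (a + h)) ^ 3 - (a + h - (a + h)) ^ 3) / 3) := this
      _ = M * h ^ 3 / 6 := by ring
  have hF : |F₁ a - F₁ (a + 2 * h)| ≤ M * (2 * h) := by
    have := hLip₁ a haI (a + 2 * h) hbI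
    rwa [show a - (a + 2 * h) = -(2 * h) by ring, abs_neg,
      abs_of_nonneg (by linarith : (0:ℝ) ≤ 2 * h)] at this
  have h5 : |(F₁ a - F₁ (a + 2 * h)) * (h ^ 2 / 2)| ≤ M * h ^ 3 := by
    rw [abs_mul, abs_of_nonneg (by positivity : (0:ℝ) ≤ h ^ 2 / 2)]
    calc |F₁ a - F₁ (a + 2 * h)| * (h ^ 2 / 2) ≤ M * (2 * h) * (h ^ 2 / 2) :=
          mul_le_mul_of_nonneg_right hF (by positivity)
      _ = M * h ^ 3 := by ring
  rw [hE1, hE2]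
  have rearr : (∫ s in a..(a + h), A₁ s) + (∫ s in a..(a + h), B s)
        + (F₁ a * (h ^ 2 / 2) - F₂ (a + h) * (h ^ 2 / 2))
        + ((∫ s in (a + h)..(a + 2 * h), A₂ s) + (∫ s in (a + h)..(a + 2 * h), B s)
        + (F₂ (a + h) * (h ^ 2 / 2) - F₁ (a + 2 * h) * (h ^ 2 / 2)))
      = (∫ s in a..(a + h), A₁ s) + (∫ s in a..(a + h), B s)
        + (∫ s in (a + h)..(a + 2 * h), A₂ s) + (∫ s in (a + h)..(a + 2 * h), B s)
        + (F₁ a - F₁ (a + 2 * h)) * (h ^ 2 / 2) := by ring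
  rw [rearr]
  have := abs_add5 (∫ s in a..(a + h), A₁ s) (∫ s in a..(a + h), B s)
    (∫ s in (a + h)..(a + 2 * h), A₂ s) (∫ s in (a + h)..(a + 2 * h), B s)
    ((F₁ a - F₁ (a + 2 * h)) * (h ^ 2 / 2))
  have hMh : 0 ≤ M * h ^ 3 := by positivity
  linarith
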